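/- Let G be a first order endotactic mass-action system whose underlying reaction graph is weakly connected and contains the zero complex (G = G⁰), with average flux matrix A ∈ M_d(ℝ) given by a_{ij} = Σ_{(e_i, y') ∈ E} κ_{e_i→y'}(y'_j − (e_i)_j) with positive rate constants κ. Then A is Metzler and WCDD, hence nonsingular with all eigenvalues of negative real part, and x_* = b(−A)^{-1} is the unique equilibrium of ẋ = xA + b, where b_i = Σ_{(0,y')∈E} κ_{0→y'} y'_i; moreover x_* is entrywise strictly positive. -/

import Mathlib

open Matrix Finset
open scoped Matrix Classical

abbrev Vec (d : ℕ) := Fin d → ℝ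
abbrev Edge (d : ℕ) := Vec d × Vec d

/-- Sources of edges whose reaction vector is not orthogonal to `u`. -/
def srcU {d : ℕ} (E : Finset (Edge d)) (u : Vec d) : Set (Vec d) :=
  {y | ∃ y', (y, y') ∈ E ∧ (y' - y) ⬝ᵥ u ≠ 0}

/-- `G` is `u`-endotactic: no `u`-endotacticity violating reaction. -/
def uEndotactic {d : ℕ} (E : Finset (Edge d)) (u : Vec d) : Prop :=
  ¬ ∃ y y', (y, y') ∈ E ∧ 0 < (y' - y) ⬝ᵥ u ∧ ∀ z ∈ srcU E u, z ⬝ᵥ u ≤ y ⬝ᵥ u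

def Endotactic {d : ℕ} (E : Finset (Edge d)) : Prop := ∀ u : Vec d, uEndotactic E u

/-- Reachability by a directed path. -/
def Reach {d : ℕ} (E : Finset (Edge d)) : Vec d → Vec d → Prop :=
  Relation.ReflTransGen (fun a b => (a, b) ∈ E)

def IsEig {d : ℕ} (A : Matrix (Fin d) (Fin d) ℝ) (μ : ℂ) : Prop :=
  ∃ v : Fin d → ℂ, v ≠ 0 ∧ (A.map Complex.ofReal).mulVec v = μ • v

def InV {d : ℕ} (E : Finset (Edge d)) (y : Vec d) : Prop :=
  ∃ e ∈ E, e.1 = y ∨ e.2 = y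

def IsSource {d : ℕ} (E : Finset (Edge d)) (y : Vec d) : Prop :=
  ∃ y', (y, y') ∈ E

def WReach {d : ℕ} (E : Finset (Edge d)) : Vec d → Vec d → Prop :=
  Relation.ReflTransGen (fun a b => (a, b) ∈ E ∨ (b, a) ∈ E)

def SDDRow {d : ℕ} (A : Matrix (Fin d) (Fin d) ℝ) (i : Fin d) : Prop :=
  ∑ j ∈ Finset.univ.erase i, |A i j| < |A i i|

def WCDD {d : ℕ} (A : Matrix (Fin d) (Fin d) ℝ) : Prop :=
  (∀ i, ∑ j ∈ Finset.univ.erase i, |A i j| ≤ |A i i|) ∧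
  ∀ i, ¬ SDDRow A i → ∃ j, SDDRow A j ∧
    Relation.ReflTransGen (fun p q : Fin d => p ≠ q ∧ A p q ≠ 0) i j

section Basic
variable {d : ℕ}

lemma sgl_apply (i j : Fin d) : (Pi.single i 1 : Vec d) j = if j = i then 1 else 0 :=
  Pi.single_apply i 1 j

lemma sgl_ne_zero (i : Fin d) : (Pi.single i 1 : Vec d) ≠ 0 := by
  intro h
  have := congrFun h i
  simp at this

lemma sgl_inj {i j : Fin d} (h : (Pi.single i 1 : Vec d) = Pi.single j 1) : i = j := by
  by_contra hne
  have := congrFun h i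
  rw [Pi.single_eq_same, Pi.single_eq_of_ne hne] at this
  simp at this

lemma sum_sgl (i : Fin d) : ∑ j, (Pi.single i 1 : Vec d) j = 1 := by
  simp [sgl_apply]

/-- sum over a finset of a single -/
lemma mS_sgl (C : Finset (Fin d)) (i : Fin d) :
    ∑ j ∈ C, (Pi.single i 1 : Vec d) j = if i ∈ C then 1 else 0 := by
  simp [sgl_apply, Finset.sum_ite_eq' C i (fun _ => (1:ℝ))]

lemma dot_indicator (C : Finset (Fin d)) (y : Vec d) :
    y ⬝ᵥ (fun j => if j ∈ C then (1:ℝ) else 0) = ∑ j ∈ C, y j := by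
  simp [dotProduct, mul_ite, mul_one, mul_zero, Finset.sum_ite_mem]

lemma classify (y : Vec d) (hy : ∀ i, ∃ n : ℕ, y i = (n:ℝ)) (hs : ∑ i, y i ≤ 1) :
    y = 0 ∨ ∃ i, y = (Pi.single i 1 : Vec d) := by
  have h1 : ∀ j, 0 ≤ y j := fun j => by obtain ⟨n, hn⟩ := hy j; rw [hn]; positivity
  by_cases h0 : y = 0
  · exact Or.inl h0
  right
  have : ∃ i, y i ≠ 0 := by
    by_contra h; push_neg at h
    exact h0 (funext fun i => h i)
  obtain ⟨i, hi⟩ := this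
  have h2 : 1 ≤ y i := by
    obtain ⟨n, hn⟩ := hy i
    rw [hn] at hi ⊢
    exact_mod_cast Nat.one_le_iff_ne_zero.2 (by exact_mod_cast fun h => hi (by rw [h]; simp))
  have hsplit : y i + ∑ j ∈ univ.erase i, y j = ∑ j, y j :=
    Finset.add_sum_erase _ y (mem_univ i)
  have hrest0 : ∑ j ∈ univ.erase i, y j = 0 := by
    have hle : ∑ j ∈ univ.erase i, y j ≤ 0 := by linarith
    have hge : 0 ≤ ∑ j ∈ univ.erase i, y j := Finset.sum_nonneg fun j _ => h1 j
    linarith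
  have heach : ∀ j ∈ univ.erase i, y j = 0 :=
    (Finset.sum_eq_zero_iff_of_nonneg fun j _ => h1 j).1 hrest0
  have hyi : y i = 1 := by
    have : y i ≤ 1 := by linarith
    linarith
  exact ⟨i, funext fun j => by
    rcases eq_or_ne j i with rfl | hne
    · rw [hyi, Pi.single_eq_same]
    · rw [heach j (Finset.mem_erase.2 ⟨hne, mem_univ j⟩), Pi.single_eq_of_ne hne]⟩

end Basic
section Struct
variable {d : ℕ} {E : Finset (Edge d)}

lemma inV_of_mem_left {e : Edge d} (he : e ∈ E) : InV E e.1 := ⟨e, he, Or.inl rfl⟩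
lemma inV_of_mem_right {e : Edge d} (he : e ∈ E) : InV E e.2 := ⟨e, he, Or.inr rfl⟩

variable (hnat : ∀ y, InV E y → ∀ i, ∃ n : ℕ, y i = (n : ℝ))
variable (hfo : ∀ y, IsSource E y → ∑ i, y i ≤ 1)
variable (hendo : Endotactic E)

include hnat hfo in
/-- Every source is 0 or a unit vector. -/
lemma source_class : ∀ y, IsSource E y → y = 0 ∨ ∃ i, y = (Pi.single i 1 : Vec d) := by
  intro y hy
  obtain ⟨y', he⟩ := hy
  exact classify y (hnat y (inV_of_mem_left he)) (hfo y ⟨y', he⟩)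

include hfo hendo in
/-- Targets of unit-vector sources have mass at most one. -/
lemma target_mass (i : Fin d) (y' : Vec d) (he : ((Pi.single i 1 : Vec d), y') ∈ E) :
    ∑ j, y' j ≤ 1 := by
  by_contra hgt
  push_neg at hgt
  refine hendo (fun _ => 1) ⟨(Pi.single i 1 : Vec d), y', he, ?_, ?_⟩
  · have : (y' - (Pi.single i 1 : Vec d)) ⬝ᵥ (fun _ => 1) = ∑ j, y' j - 1 := by
      simp [dotProduct, Finset.sum_sub_distrib, sum_sgl]
    rw [this]; linarith
  · intro z hz
    obtain ⟨w, hw, -⟩ := hz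
    have h1 : z ⬝ᵥ (fun _ => 1) = ∑ j, z j := by simp [dotProduct]
    have h2 : (Pi.single i 1 : Vec d) ⬝ᵥ (fun _ => 1) = 1 := by
      simp [dotProduct, sum_sgl]
    rw [h1, h2]
    exact hfo z ⟨w, hw⟩

include hnat hfo hendo in
/-- Targets of unit-vector sources are 0 or unit vectors. -/
lemma target_class (i : Fin d) (y' : Vec d) (he : ((Pi.single i 1 : Vec d), y') ∈ E) :
    y' = 0 ∨ ∃ j, y' = (Pi.single j 1 : Vec d) :=
  classify y' (hnat y' (inV_of_mem_right he)) (target_mass hfo hendo i y' he)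

include hnat hfo hendo in
/-- Every unit vector is the source of a reaction that consumes it. -/
lemma species_consumed (hnored : ∀ i : Fin d, ∃ e ∈ E, e.2 i ≠ e.1 i) (i : Fin d) :
    ∃ y', ((Pi.single i 1 : Vec d), y') ∈ E ∧ y' i = 0 := by
  set u : Vec d := Pi.single i 1 with hu
  by_cases hcase : ∃ y', ((Pi.single i 1 : Vec d), y') ∈ E ∧ y' i ≠ 1
  · obtain ⟨y', he, hy'⟩ := hcase
    refine ⟨y', he, ?_⟩
    rcases target_class hnat hfo hendo i y' he with rfl | ⟨j, rfl⟩
    · rfl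
    · by_cases hji : j = i
      · subst hji; exact absurd (by simp) hy'
      · exact Pi.single_eq_of_ne (Ne.symm hji) 1
  · push_neg at hcase
    exfalso
    obtain ⟨e, he, hei⟩ := hnored i
    -- e.1 is a source
    have hdot : ∀ z : Vec d, z ⬝ᵥ u = z i := by
      intro z; simp [hu, dotProduct, sgl_apply, mul_ite, Finset.sum_ite_eq' univ i]
    have hdotsub : ∀ z w : Vec d, (w - z) ⬝ᵥ u = w i - z i := by
      intro z w
      have := hdot (w - z); simpa using this
    -- all srcU members have i-th coordinate 0
    have hsrc0 : ∀ z ∈ srcU E u, z i = 0 := by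
      rintro z ⟨w, hw, hdw⟩
      rw [hdotsub] at hdw
      rcases source_class hnat hfo (y := z) ⟨w, hw⟩ with rfl | ⟨j, rfl⟩
      · rfl
      · by_cases hji : j = i
        · subst hji
          exact absurd (by rw [hcase w hw, Pi.single_eq_same]; ring) hdw
        · exact Pi.single_eq_of_ne (Ne.symm hji) 1
    -- e violates endotacticity
    have he1i : e.1 i = 0 := hsrc0 e.1 ⟨e.2, by simpa using he, by rw [hdotsub]; exact sub_ne_zero.2 hei⟩
    have he2i : 0 < e.2 i := by
      obtain ⟨n, hn⟩ := hnat e.2 (inV_of_mem_right he) i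
      have hne : e.2 i ≠ 0 := by rw [← he1i]; exact hei
      rw [hn] at hne ⊢
      exact_mod_cast Nat.pos_of_ne_zero (by exact_mod_cast hne)
    refine hendo u ⟨e.1, e.2, by simpa using he, ?_, ?_⟩
    · rw [hdotsub]; linarith
    · intro z hz
      rw [hdot, hdot, he1i, hsrc0 z hz]

end Struct
section Struct2
variable {d : ℕ} {E : Finset (Edge d)}
variable (hnat : ∀ y, InV E y → ∀ i, ∃ n : ℕ, y i = (n : ℝ))
variable (hfo : ∀ y, IsSource E y → ∑ i, y i ≤ 1)
variable (hendo : Endotactic E)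

include hnat in
lemma coord_nonneg {y : Vec d} (hy : InV E y) (i : Fin d) : 0 ≤ y i := by
  obtain ⟨n, hn⟩ := hnat y hy i; rw [hn]; positivity

include hnat hfo hendo in
lemma species_reach_zero (h0 : InV E (0 : Vec d))
    (hconn : ∀ y z, InV E y → InV E z → WReach E y z)
    (hnored : ∀ i : Fin d, ∃ e ∈ E, e.2 i ≠ e.1 i)
    (i : Fin d) : Reach E (Pi.single i 1) 0 := by
  by_contra hnr
  set C : Finset (Fin d) := univ.filter (fun j => ¬ Reach E (Pi.single j 1) 0) with hC
  have hiC : i ∈ C := by simp [hC, hnr]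
  set u : Vec d := fun j => if j ∈ C then 1 else 0 with hu
  have hdot : ∀ z : Vec d, z ⬝ᵥ u = ∑ j ∈ C, z j := fun z => dot_indicator C z
  have hdotsub : ∀ z w : Vec d, (w - z) ⬝ᵥ u = (∑ j ∈ C, w j) - (∑ j ∈ C, z j) := by
    intro z w; rw [sub_dotProduct, hdot, hdot]
  -- every edge out of a C-single goes to a C-single
  have hCC : ∀ j ∈ C, ∀ y', ((Pi.single j 1 : Vec d), y') ∈ E →
      ∃ k ∈ C, y' = (Pi.single k 1 : Vec d) := by
    intro j hj y' he
    have hjnr : ¬ Reach E (Pi.single j 1) 0 := (Finset.mem_filter.1 hj).2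
    rcases target_class hnat hfo hendo j y' he with rfl | ⟨k, rfl⟩
    · exact absurd (Relation.ReflTransGen.single he) hjnr
    · refine ⟨k, ?_, rfl⟩
      by_contra hk
      have hkr : Reach E (Pi.single k 1) 0 := by
        by_contra h; exact hk (by simp [hC, h])
      exact hjnr ((Relation.ReflTransGen.single he).trans hkr)
  have hCzero : ∀ j ∈ C, ∀ y', ((Pi.single j 1 : Vec d), y') ∈ E →
      (y' - (Pi.single j 1 : Vec d)) ⬝ᵥ u = 0 := by
    intro j hj y' he
    obtain ⟨k, hk, rfl⟩ := hCC j hj y' he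
    rw [hdotsub, mS_sgl, mS_sgl, if_pos hj, if_pos hk, sub_self]
  -- classification of C-mass of sources
  have hsrc : ∀ z, IsSource E z → (∃ j ∈ C, z = (Pi.single j 1 : Vec d)) ∨ ∑ j ∈ C, z j = 0 := by
    intro z hz
    rcases source_class hnat hfo z hz with rfl | ⟨j, rfl⟩
    · right; simp
    · by_cases hj : j ∈ C
      · exact Or.inl ⟨j, hj, rfl⟩
      · right; rw [mS_sgl, if_neg hj]
  -- edges from zero-C-mass sources keep zero C-mass
  have hkey : ∀ zw : Edge d, zw ∈ E → ∑ j ∈ C, zw.1 j = 0 → ∑ j ∈ C, zw.2 j = 0 := by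
    intro zw he hz
    by_contra hne
    have hpos : 0 < ∑ j ∈ C, zw.2 j :=
      lt_of_le_of_ne (Finset.sum_nonneg fun j _ => coord_nonneg hnat (inV_of_mem_right he) j)
        (Ne.symm hne)
    refine hendo u ⟨zw.1, zw.2, by simpa using he, ?_, ?_⟩
    · rw [hdotsub, hz]; linarith
    · rintro z ⟨w, hw, hdw⟩
      rw [hdot, hdot, hz]
      rcases hsrc z ⟨w, hw⟩ with ⟨j, hj, rfl⟩ | h0'
      · exact absurd (hCzero j hj w hw) hdw
      · rw [h0']
  -- invariant along weak paths starting at 0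
  have hinv : ∀ v, WReach E 0 v → ∑ j ∈ C, v j = 0 := by
    intro v hv
    induction hv with
    | refl => simp
    | @tail b c hab hbc ih =>
      rcases hbc with hbc | hcb
      · exact hkey (b, c) hbc ih
      · rcases hsrc c ⟨b, hcb⟩ with ⟨j, hj, rfl⟩ | h0'
        · exfalso
          obtain ⟨k, hk, rfl⟩ := hCC j hj b hcb
          rw [mS_sgl, if_pos hk] at ih
          exact one_ne_zero ih
        · exact h0'
  -- contradiction with i ∈ C
  obtain ⟨y', he, -⟩ := species_consumed hnat hfo hendo hnored i
  have hInV : InV E (Pi.single i 1 : Vec d) := inV_of_mem_left (e := (Pi.single i 1, y')) he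
  have := hinv _ (hconn 0 (Pi.single i 1) h0 hInV)
  rw [mS_sgl, if_pos hiC] at this
  exact one_ne_zero this
end Struct2
section Mat
variable {d : ℕ} {E : Finset (Edge d)} {κ : Edge d → ℝ} {A : Matrix (Fin d) (Fin d) ℝ}
variable (hnat : ∀ y, InV E y → ∀ i, ∃ n : ℕ, y i = (n : ℝ))
variable (hfo : ∀ y, IsSource E y → ∑ i, y i ≤ 1)
variable (hendo : Endotactic E)
variable (hκ : ∀ e ∈ E, 0 < κ e)
variable (hA : ∀ i j, A i j =
      ∑ e ∈ E.filter (fun e => e.1 = (Pi.single i 1 : Vec d)), κ e * (e.2 j - e.1 j))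

lemma mem_of_filter {e : Edge d} {i : Fin d}
    (he : e ∈ E.filter (fun e => e.1 = (Pi.single i 1 : Vec d))) :
    ((Pi.single i 1 : Vec d), e.2) ∈ E := by
  obtain ⟨heE, he1⟩ := Finset.mem_filter.1 he
  rwa [← he1, Prod.mk.eta]

include hnat hfo hendo in
lemma target_coord_le_one {i : Fin d} {y' : Vec d}
    (he : ((Pi.single i 1 : Vec d), y') ∈ E) (j : Fin d) : y' j ≤ 1 := by
  rcases target_class hnat hfo hendo i y' he with rfl | ⟨k, rfl⟩
  · norm_num
  · rw [sgl_apply]; split <;> norm_num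

include hnat hκ hA in
lemma metzler : ∀ i j, i ≠ j → 0 ≤ A i j := by
  intro i j hij
  rw [hA]
  refine Finset.sum_nonneg fun e he => ?_
  have h1 : e.1 j = 0 := by
    rw [(Finset.mem_filter.1 he).2]; exact Pi.single_eq_of_ne (Ne.symm hij) 1
  rw [h1, sub_zero]
  exact mul_nonneg (hκ e (Finset.mem_filter.1 he).1).le
    (coord_nonneg hnat (inV_of_mem_right (Finset.mem_filter.1 he).1) j)

include hnat hfo hendo hκ hA in
lemma diag_nonpos : ∀ i, A i i ≤ 0 := by
  intro i
  rw [hA]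
  refine Finset.sum_nonpos fun e he => ?_
  have h1 : e.1 i = 1 := by rw [(Finset.mem_filter.1 he).2]; exact Pi.single_eq_same i 1
  have h2 : e.2 i ≤ 1 := target_coord_le_one hnat hfo hendo (mem_of_filter he) i
  have h3 := (hκ e (Finset.mem_filter.1 he).1).le
  nlinarith

include hA in
lemma row_sum_eq (i : Fin d) :
    ∑ j, A i j =
      ∑ e ∈ E.filter (fun e => e.1 = (Pi.single i 1 : Vec d)), κ e * ((∑ j, e.2 j) - 1) := by
  simp only [hA]
  rw [Finset.sum_comm]
  refine Finset.sum_congr rfl fun e he => ?_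
  have h1 : ∑ j, e.1 j = 1 := by rw [(Finset.mem_filter.1 he).2]; exact sum_sgl i
  rw [← h1]
  simp [Finset.sum_sub_distrib, mul_sub, Finset.mul_sum]

include hnat hfo hendo hκ hA in
lemma row_sum_nonpos (i : Fin d) : ∑ j, A i j ≤ 0 := by
  rw [row_sum_eq hA]
  refine Finset.sum_nonpos fun e he => ?_
  have h2 : ∑ j, e.2 j ≤ 1 := target_mass hfo hendo i e.2 (mem_of_filter he)
  have h3 := (hκ e (Finset.mem_filter.1 he).1).le
  nlinarith

include hnat hfo hendo hκ hA in
lemma row_dom (i : Fin d) : ∑ j ∈ Finset.univ.erase i, |A i j| ≤ |A i i| := by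
  have h1 : ∀ j ∈ Finset.univ.erase i, |A i j| = A i j := fun j hj =>
    abs_of_nonneg (metzler hnat hκ hA i j (Ne.symm (Finset.mem_erase.1 hj).1))
  rw [Finset.sum_congr rfl h1, abs_of_nonpos (diag_nonpos hnat hfo hendo hκ hA i)]
  have hsplit : A i i + ∑ j ∈ Finset.univ.erase i, A i j = ∑ j, A i j :=
    Finset.add_sum_erase _ _ (Finset.mem_univ i)
  have := row_sum_nonpos hnat hfo hendo hκ hA i
  linarith

include hnat hfo hendo hκ hA in
lemma sdd_of_edge_to_zero {i : Fin d} (he : ((Pi.single i 1 : Vec d), (0 : Vec d)) ∈ E) :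
    SDDRow A i := by
  have hmem : ((Pi.single i 1 : Vec d), (0 : Vec d)) ∈
      E.filter (fun e => e.1 = (Pi.single i 1 : Vec d)) := Finset.mem_filter.2 ⟨he, rfl⟩
  have hneg : ∑ j, A i j < 0 := by
    rw [row_sum_eq hA]
    have : ∀ e ∈ E.filter (fun e => e.1 = (Pi.single i 1 : Vec d)),
        κ e * ((∑ j, e.2 j) - 1) ≤ 0 := by
      intro e he'
      have h2 : ∑ j, e.2 j ≤ 1 := target_mass hfo hendo i e.2 (mem_of_filter he')
      have h3 := (hκ e (Finset.mem_filter.1 he').1).le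
      nlinarith
    rw [← Finset.add_sum_erase _ _ hmem]
    have hrest : ∑ e ∈ (E.filter (fun e => e.1 = (Pi.single i 1 : Vec d))).erase
        ((Pi.single i 1 : Vec d), (0 : Vec d)), κ e * ((∑ j, e.2 j) - 1) ≤ 0 :=
      Finset.sum_nonpos fun e he' => this e (Finset.mem_of_mem_erase he')
    have hterm : κ ((Pi.single i 1 : Vec d), (0 : Vec d)) *
        ((∑ j, (0 : Vec d) j) - 1) < 0 := by
      have := hκ _ he
      simp only [Pi.zero_apply, Finset.sum_const_zero]
      nlinarith
    linarith
  have h1 : ∀ j ∈ Finset.univ.erase i, |A i j| = A i j := fun j hj =>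
    abs_of_nonneg (metzler hnat hκ hA i j (Ne.symm (Finset.mem_erase.1 hj).1))
  rw [SDDRow, Finset.sum_congr rfl h1, abs_of_nonpos (diag_nonpos hnat hfo hendo hκ hA i)]
  have hsplit : A i i + ∑ j ∈ Finset.univ.erase i, A i j = ∑ j, A i j :=
    Finset.add_sum_erase _ _ (Finset.mem_univ i)
  linarith

include hnat hκ hA in
lemma offdiag_pos_of_edge {i j : Fin d} (hij : i ≠ j)
    (he : ((Pi.single i 1 : Vec d), (Pi.single j 1 : Vec d)) ∈ E) : 0 < A i j := by
  rw [hA]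
  refine Finset.sum_pos' ?_ ⟨((Pi.single i 1 : Vec d), (Pi.single j 1 : Vec d)),
    Finset.mem_filter.2 ⟨he, rfl⟩, ?_⟩
  · intro e he'
    have h1 : e.1 j = 0 := by
      rw [(Finset.mem_filter.1 he').2]; exact Pi.single_eq_of_ne (Ne.symm hij) 1
    rw [h1, sub_zero]
    exact mul_nonneg (hκ e (Finset.mem_filter.1 he').1).le
      (coord_nonneg hnat (inV_of_mem_right (Finset.mem_filter.1 he').1) j)
  · simp only
    rw [Pi.single_eq_same, Pi.single_eq_of_ne (Ne.symm hij)]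
    have := hκ _ he
    nlinarith

include hnat hfo hendo hκ hA in
lemma chain_to_sdd (hsimple : ∀ e ∈ E, e.1 ≠ e.2)
    (h0 : InV E (0 : Vec d))
    (hconn : ∀ y z, InV E y → InV E z → WReach E y z)
    (hnored : ∀ i : Fin d, ∃ e ∈ E, e.2 i ≠ e.1 i)
    (i : Fin d) : ∃ k, SDDRow A k ∧
      Relation.ReflTransGen (fun p q : Fin d => p ≠ q ∧ A p q ≠ 0) i k := by
  have hreach : Reach E (Pi.single i 1) 0 :=
    species_reach_zero hnat hfo hendo h0 hconn hnored i
  suffices h : ∀ v, Reach E v 0 → ∀ i : Fin d, v = (Pi.single i 1 : Vec d) →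
      ∃ k, SDDRow A k ∧ Relation.ReflTransGen (fun p q : Fin d => p ≠ q ∧ A p q ≠ 0) i k from
    h _ hreach i rfl
  intro v hv
  induction hv using Relation.ReflTransGen.head_induction_on with
  | refl => exact fun i hi => absurd hi.symm (sgl_ne_zero i)
  | head hac hcb ih =>
    rename_i a c
    intro i hi
    subst hi
    rcases target_class hnat hfo hendo i c hac with rfl | ⟨j, rfl⟩
    · exact ⟨i, sdd_of_edge_to_zero hnat hfo hendo hκ hA hac, Relation.ReflTransGen.refl⟩
    · have hij : i ≠ j := fun h => hsimple _ hac (by rw [h])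
      obtain ⟨k, hk, hpath⟩ := ih j rfl
      exact ⟨k, hk, Relation.ReflTransGen.head
        ⟨hij, ne_of_gt (offdiag_pos_of_edge hnat hκ hA hij hac)⟩ hpath⟩

end Mat
section Key

lemma wcdd_kernel {d : ℕ} (B : Matrix (Fin d) (Fin d) ℂ)
    (H1 : ∀ i, ∑ j ∈ Finset.univ.erase i, ‖B i j‖ ≤ ‖B i i‖)
    (H2 : ∀ i : Fin d, ∃ j,
      (∑ k ∈ Finset.univ.erase j, ‖B j k‖ < ‖B j j‖) ∧
      Relation.ReflTransGen (fun p q : Fin d => p ≠ q ∧ B p q ≠ 0) i j)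
    (v : Fin d → ℂ) (hv : B.mulVec v = 0) : v = 0 := by
  by_contra hv0
  have hex : ∃ i, v i ≠ 0 := by
    by_contra h; push_neg at h; exact hv0 (funext h)
  obtain ⟨iv, hiv⟩ := hex
  obtain ⟨i0, -, hi0⟩ := Finset.exists_max_image Finset.univ (fun i => ‖v i‖)
    ⟨iv, Finset.mem_univ iv⟩
  set M : ℝ := ‖v i0‖ with hM
  have hMpos : 0 < M := lt_of_lt_of_le (norm_pos_iff.2 hiv)
    (hi0 iv (Finset.mem_univ iv))
  have hle : ∀ j, ‖v j‖ ≤ M := fun j => hi0 j (Finset.mem_univ j)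
  -- basic estimate at any row where the max is attained
  have hbasic : ∀ i, ‖v i‖ = M →
      ‖B i i‖ * M ≤
        ∑ j ∈ Finset.univ.erase i, ‖B i j‖ * ‖v j‖ := by
    intro i hi
    have heq : B i i * v i + ∑ j ∈ Finset.univ.erase i, B i j * v j = 0 := by
      have h1 : ∑ j, B i j * v j = 0 := by
        have := congrFun hv i
        simpa [Matrix.mulVec, dotProduct] using this
      rw [Finset.add_sum_erase _ (fun j => B i j * v j) (Finset.mem_univ i)]
      exact h1
    have heq2 : B i i * v i = -(∑ j ∈ Finset.univ.erase i, B i j * v j) :=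
      eq_neg_of_add_eq_zero_left heq
    calc ‖B i i‖ * M = ‖B i i * v i‖ := by rw [norm_mul, hi]
      _ = ‖∑ j ∈ Finset.univ.erase i, B i j * v j‖ := by
          rw [heq2, norm_neg]
      _ ≤ ∑ j ∈ Finset.univ.erase i, ‖B i j * v j‖ :=
          norm_sum_le _ _
      _ = ∑ j ∈ Finset.univ.erase i, ‖B i j‖ * ‖v j‖ := by
          simp [_root_.map_mul]
  -- the max propagates along the sparsity digraph
  have hstep : ∀ i, ‖v i‖ = M → ∀ j, j ≠ i → B i j ≠ 0 →
      ‖v j‖ = M := by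
    intro i hi j hji hBij
    have h1 := hbasic i hi
    have h2 : ∀ k ∈ Finset.univ.erase i,
        ‖B i k‖ * ‖v k‖ ≤ ‖B i k‖ * M := fun k _ =>
      mul_le_mul_of_nonneg_left (hle k) (norm_nonneg _)
    have h3 : ∑ k ∈ Finset.univ.erase i, ‖B i k‖ * M ≤ ‖B i i‖ * M := by
      rw [← Finset.sum_mul]
      exact mul_le_mul_of_nonneg_right (H1 i) hMpos.le
    -- all inequalities are equalities
    have hsum0 : ∑ k ∈ Finset.univ.erase i,
        ‖B i k‖ * (M - ‖v k‖) = 0 := by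
      have hexp : ∑ k ∈ Finset.univ.erase i, ‖B i k‖ * (M - ‖v k‖) =
          (∑ k ∈ Finset.univ.erase i, ‖B i k‖ * M) -
          ∑ k ∈ Finset.univ.erase i, ‖B i k‖ * ‖v k‖ := by
        rw [← Finset.sum_sub_distrib]
        exact Finset.sum_congr rfl fun k _ => by ring
      have hup : ∑ k ∈ Finset.univ.erase i, ‖B i k‖ * ‖v k‖ ≤
          ∑ k ∈ Finset.univ.erase i, ‖B i k‖ * M := Finset.sum_le_sum h2
      have hnn : 0 ≤ ∑ k ∈ Finset.univ.erase i, ‖B i k‖ * (M - ‖v k‖) := by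
        refine Finset.sum_nonneg fun k _ => mul_nonneg (norm_nonneg _) ?_
        linarith [hle k]
      linarith
    have heach := (Finset.sum_eq_zero_iff_of_nonneg fun k _ =>
      mul_nonneg (norm_nonneg _) (by linarith [hle k])).1 hsum0
    have hj := heach j (Finset.mem_erase.2 ⟨hji, Finset.mem_univ j⟩)
    have hBpos : 0 < ‖B i j‖ := norm_pos_iff.2 hBij
    have := mul_eq_zero.1 hj
    rcases this with h | h
    · exact absurd h (ne_of_gt hBpos)
    · linarith [hle j]
  -- follow the path from i0 to an SDD row
  obtain ⟨k, hsdd, hpath⟩ := H2 i0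
  have hvk : ‖v k‖ = M := by
    clear hsdd
    induction hpath with
    | refl => exact hM.symm
    | tail hab hbc ih => exact hstep _ ih _ (Ne.symm hbc.1) hbc.2
  -- contradiction at the SDD row
  have h1 := hbasic k hvk
  have h2 : ∑ j ∈ Finset.univ.erase k, ‖B k j‖ * ‖v j‖ ≤
      ∑ j ∈ Finset.univ.erase k, ‖B k j‖ * M :=
    Finset.sum_le_sum fun j _ => mul_le_mul_of_nonneg_left (hle j) (norm_nonneg _)
  have h3 : ∑ j ∈ Finset.univ.erase k, ‖B k j‖ * M < ‖B k k‖ * M := by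
    rw [← Finset.sum_mul]
    exact mul_lt_mul_of_pos_right hsdd hMpos
  linarith

end Key
section Spect
variable {d : ℕ} {A : Matrix (Fin d) (Fin d) ℝ}
variable (hdom : ∀ i, ∑ j ∈ Finset.univ.erase i, |A i j| ≤ |A i i|)
variable (hdiag : ∀ i, A i i ≤ 0)
variable (hchain : ∀ i : Fin d, ∃ k, SDDRow A k ∧
    Relation.ReflTransGen (fun p q : Fin d => p ≠ q ∧ A p q ≠ 0) i k)

include hdom hdiag hchain in
lemma shifted_kernel (μ : ℂ) (hμ : 0 ≤ μ.re) (v : Fin d → ℂ)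
    (hv : (A.map Complex.ofReal - μ • 1).mulVec v = 0) : v = 0 := by
  set B := A.map Complex.ofReal - μ • (1 : Matrix (Fin d) (Fin d) ℂ) with hB
  have hBoff : ∀ p q : Fin d, p ≠ q → B p q = (A p q : ℂ) := by
    intro p q h
    simp [hB, Matrix.map_apply, Matrix.one_apply_ne h]
  have hBdiag : ∀ i, B i i = (A i i : ℂ) - μ := by
    intro i
    simp [hB, Matrix.map_apply, Matrix.one_apply_eq]
  have habsoff : ∀ p q : Fin d, p ≠ q → ‖B p q‖ = |A p q| := by
    intro p q h; rw [hBoff p q h, Complex.norm_real, Real.norm_eq_abs]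
  have habsdiag : ∀ i, |A i i| ≤ ‖B i i‖ := by
    intro i
    have h1 : (B i i).re = A i i - μ.re := by rw [hBdiag]; simp
    have h2 : |(B i i).re| ≤ ‖B i i‖ := Complex.abs_re_le_norm _
    have h3 : |A i i| = -(A i i) := abs_of_nonpos (hdiag i)
    have h4 : -(A i i) ≤ -(A i i) + μ.re := by linarith
    have h5 : -(A i i) + μ.re = -((B i i).re) := by rw [h1]; ring
    have h6 : -((B i i).re) ≤ |(B i i).re| := neg_le_abs _
    linarith
  have hoffsum : ∀ i, ∑ j ∈ Finset.univ.erase i, ‖B i j‖ =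
      ∑ j ∈ Finset.univ.erase i, |A i j| := by
    intro i
    exact Finset.sum_congr rfl fun j hj =>
      habsoff i j (Ne.symm (Finset.mem_erase.1 hj).1)
  refine wcdd_kernel B ?_ ?_ v hv
  · intro i
    rw [hoffsum i]
    exact (hdom i).trans (habsdiag i)
  · intro i
    obtain ⟨k, hk, hpath⟩ := hchain i
    refine ⟨k, ?_, ?_⟩
    · rw [hoffsum k]
      exact lt_of_lt_of_le hk (habsdiag k)
    · refine Relation.ReflTransGen.mono ?_ _ _ hpath
      intro p q ⟨hpq, hApq⟩
      refine ⟨hpq, ?_⟩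
      rw [hBoff p q hpq]
      exact_mod_cast hApq

include hdom hdiag hchain in
lemma det_ne_zero' : A.det ≠ 0 := by
  intro hdet
  have hdetC : (A.map Complex.ofReal).det = 0 := by
    have : A.map Complex.ofReal = (Complex.ofRealHom : ℝ →+* ℂ).mapMatrix A := rfl
    rw [this, ← RingHom.map_det, hdet]
    simp
  obtain ⟨v, hv0, hv⟩ := (Matrix.exists_mulVec_eq_zero_iff).2 hdetC
  refine hv0 (shifted_kernel hdom hdiag hchain 0 (by simp) v ?_)
  simpa using hv

include hdom hdiag hchain in
lemma eig_re_neg : ∀ μ : ℂ, IsEig A μ → μ.re < 0 := by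
  intro μ hμ
  by_contra hre
  push_neg at hre
  obtain ⟨v, hv0, hv⟩ := hμ
  refine hv0 (shifted_kernel hdom hdiag hchain μ hre v ?_)
  rw [Matrix.sub_mulVec, hv, Matrix.smul_mulVec, Matrix.one_mulVec, sub_self]

end Spect
section Equil

lemma equil_iff {d : ℕ} {A : Matrix (Fin d) (Fin d) ℝ} (hdet : A.det ≠ 0) (b : Vec d) :
    ∀ y : Vec d, y ᵥ* A + b = 0 ↔ y = b ᵥ* (-A)⁻¹ := by
  have hdet' : IsUnit (-A).det := by
    rw [Matrix.det_neg]
    exact isUnit_iff_ne_zero.2 (by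
      intro h
      rcases mul_eq_zero.1 h with h | h
      · exact absurd h (pow_ne_zero _ (by norm_num))
      · exact hdet h)
  intro y
  constructor
  · intro h
    have hb' : b = y ᵥ* (-A) := by
      rw [Matrix.vecMul_neg]
      have : y ᵥ* A = -b := by
        have := congrArg (fun z => z - b) h
        simpa using this
      rw [this, neg_neg]
    rw [hb', Matrix.vecMul_vecMul, Matrix.mul_nonsing_inv _ hdet', Matrix.vecMul_one]
  · intro h
    have : y ᵥ* (-A) = b := by
      rw [h, Matrix.vecMul_vecMul, Matrix.nonsing_inv_mul _ hdet', Matrix.vecMul_one]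
    rw [Matrix.vecMul_neg] at this
    have hyA : y ᵥ* A = -b := by
      have := congrArg Neg.neg this
      simpa using this
    rw [hyA]; simp

end Equil

section Pos
variable {d : ℕ} {E : Finset (Edge d)} {κ : Edge d → ℝ} {A : Matrix (Fin d) (Fin d) ℝ} {b : Vec d}
variable (hnat : ∀ y, InV E y → ∀ i, ∃ n : ℕ, y i = (n : ℝ))
variable (hfo : ∀ y, IsSource E y → ∑ i, y i ≤ 1)
variable (hendo : Endotactic E)
variable (hκ : ∀ e ∈ E, 0 < κ e)
variable (hA : ∀ i j, A i j =
      ∑ e ∈ E.filter (fun e => e.1 = (Pi.single i 1 : Vec d)), κ e * (e.2 j - e.1 j))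
variable (hb : ∀ i, b i = ∑ e ∈ E.filter (fun e => e.1 = (0 : Vec d)), κ e * e.2 i)

lemma no_trap {C : Finset (Fin d)}
    (hC : ∀ i ∈ C, ∀ y', ((Pi.single i 1 : Vec d), y') ∈ E →
      ∃ k ∈ C, y' = (Pi.single k 1 : Vec d))
    {i : Fin d} (hi : i ∈ C) (hreach : Reach E (Pi.single i 1) 0) : False := by
  suffices h : ∀ v, Reach E v 0 → ∀ i ∈ C, v = (Pi.single i 1 : Vec d) → False from
    h _ hreach i hi rfl
  intro v hv
  induction hv using Relation.ReflTransGen.head_induction_on with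
  | refl => intro i _ hi0; exact sgl_ne_zero i hi0.symm
  | head hac hcb ih =>
    intro i hiC hv
    subst hv
    obtain ⟨k, hk, rfl⟩ := hC i hiC _ hac
    exact ih k hk rfl

include hA in
lemma colsum (i : Fin d) (C : Finset (Fin d)) :
    ∑ j ∈ C, A i j = ∑ e ∈ E.filter (fun e => e.1 = (Pi.single i 1 : Vec d)),
      κ e * ((∑ j ∈ C, e.2 j) - (if i ∈ C then 1 else 0)) := by
  simp only [hA]
  rw [Finset.sum_comm]
  refine Finset.sum_congr rfl fun e he => ?_
  have h1 : ∑ j ∈ C, e.1 j = (if i ∈ C then (1:ℝ) else 0) := by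
    rw [(Finset.mem_filter.1 he).2]; exact mS_sgl C i
  rw [← h1]
  simp [Finset.sum_sub_distrib, mul_sub, Finset.mul_sum]

include hb in
lemma bsum (C : Finset (Fin d)) :
    ∑ j ∈ C, b j = ∑ e ∈ E.filter (fun e => e.1 = (0 : Vec d)), κ e * ∑ j ∈ C, e.2 j := by
  simp only [hb]
  rw [Finset.sum_comm]
  simp [Finset.mul_sum]

lemma balance (x : Vec d) (hx : x ᵥ* A + b = 0) (C : Finset (Fin d)) :
    ∑ i, x i * (∑ j ∈ C, A i j) + ∑ j ∈ C, b j = 0 := by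
  have h1 : ∀ j, (x ᵥ* A) j + b j = 0 := fun j => by
    have := congrFun hx j; simpa using this
  have h2 : ∑ j ∈ C, ((x ᵥ* A) j + b j) = 0 := Finset.sum_eq_zero fun j _ => h1 j
  rw [Finset.sum_add_distrib] at h2
  have h3 : ∑ j ∈ C, (x ᵥ* A) j = ∑ i, x i * ∑ j ∈ C, A i j := by
    simp only [Matrix.vecMul, dotProduct]
    rw [Finset.sum_comm]
    simp [Finset.mul_sum]
  rw [h3] at h2
  exact h2

include hnat in
lemma mS_nonneg {y : Vec d} (hy : InV E y) (C : Finset (Fin d)) : 0 ≤ ∑ j ∈ C, y j :=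
  Finset.sum_nonneg fun j _ => coord_nonneg hnat hy j

include hnat hfo hendo in
lemma mS_target_le_one {i : Fin d} {y' : Vec d}
    (he : ((Pi.single i 1 : Vec d), y') ∈ E) (C : Finset (Fin d)) : ∑ j ∈ C, y' j ≤ 1 := by
  refine le_trans (Finset.sum_le_sum_of_subset_of_nonneg (Finset.subset_univ C)
    fun j _ _ => coord_nonneg hnat (inV_of_mem_right he) j) ?_
  exact target_mass hfo hendo i y' he

include hnat hfo hendo hκ hA hb in
lemma equil_nonneg (hsimple : ∀ e ∈ E, e.1 ≠ e.2)
    (h0 : InV E (0 : Vec d))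
    (hconn : ∀ y z, InV E y → InV E z → WReach E y z)
    (hnored : ∀ i : Fin d, ∃ e ∈ E, e.2 i ≠ e.1 i)
    (x : Vec d) (hx : x ᵥ* A + b = 0) : ∀ i, 0 ≤ x i := by
  set C : Finset (Fin d) := Finset.univ.filter (fun i => x i < 0) with hCdef
  have hmain : ∀ i ∈ Finset.univ, 0 ≤ x i * (∑ j ∈ C, A i j) := by
    intro i _
    by_cases hiC : i ∈ C
    · have hx_neg : x i < 0 := (Finset.mem_filter.1 hiC).2
      have hcs : (∑ j ∈ C, A i j) ≤ 0 := by
        rw [colsum hA, if_pos hiC]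
        refine Finset.sum_nonpos fun e he => ?_
        have h2 : ∑ j ∈ C, e.2 j ≤ 1 := mS_target_le_one hnat hfo hendo (mem_of_filter he) C
        have h3 := (hκ e (Finset.mem_filter.1 he).1).le
        nlinarith
      nlinarith
    · have hx_nn : 0 ≤ x i := le_of_not_gt fun h => hiC (Finset.mem_filter.2 ⟨Finset.mem_univ i, h⟩)
      have hcs : 0 ≤ (∑ j ∈ C, A i j) := by
        rw [colsum hA, if_neg hiC]
        refine Finset.sum_nonneg fun e he => ?_
        have h2 : 0 ≤ ∑ j ∈ C, e.2 j :=
          mS_nonneg hnat (inV_of_mem_right (Finset.mem_filter.1 he).1) C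
        have h3 := (hκ e (Finset.mem_filter.1 he).1).le
        nlinarith
      exact mul_nonneg hx_nn hcs
  have hbpos : 0 ≤ ∑ j ∈ C, b j := by
    rw [bsum hb]
    refine Finset.sum_nonneg fun e he => ?_
    exact mul_nonneg (hκ e (Finset.mem_filter.1 he).1).le
      (mS_nonneg hnat (inV_of_mem_right (Finset.mem_filter.1 he).1) C)
  have hbal := balance x hx C
  have hsum0 : ∑ i, x i * (∑ j ∈ C, A i j) = 0 := by
    have h1 : 0 ≤ ∑ i, x i * (∑ j ∈ C, A i j) := Finset.sum_nonneg hmain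
    linarith
  have heach := (Finset.sum_eq_zero_iff_of_nonneg hmain).1 hsum0
  -- for i ∈ C, all edges from single i stay in C
  have hC : ∀ i ∈ C, ∀ y', ((Pi.single i 1 : Vec d), y') ∈ E →
      ∃ k ∈ C, y' = (Pi.single k 1 : Vec d) := by
    intro i hiC y' hey
    have hx_neg : x i < 0 := (Finset.mem_filter.1 hiC).2
    have hcs0 : (∑ j ∈ C, A i j) = 0 := by
      have := heach i (Finset.mem_univ i)
      rcases mul_eq_zero.1 this with h | h
      · exact absurd h (ne_of_lt hx_neg)
      · exact h
    rw [colsum hA, if_pos hiC] at hcs0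
    have hterms : ∀ e ∈ E.filter (fun e => e.1 = (Pi.single i 1 : Vec d)),
        κ e * ((∑ j ∈ C, e.2 j) - 1) = 0 := by
      refine (Finset.sum_eq_zero_iff_of_nonpos fun e he => ?_).1 hcs0
      have h2 : ∑ j ∈ C, e.2 j ≤ 1 := mS_target_le_one hnat hfo hendo (mem_of_filter he) C
      have h3 := (hκ e (Finset.mem_filter.1 he).1).le
      nlinarith
    have hmem : ((Pi.single i 1 : Vec d), y') ∈
        E.filter (fun e => e.1 = (Pi.single i 1 : Vec d)) := Finset.mem_filter.2 ⟨hey, rfl⟩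
    have h1 := hterms _ hmem
    have hκpos := hκ _ hey
    have hmass : ∑ j ∈ C, y' j = 1 := by
      rcases mul_eq_zero.1 h1 with h | h
      · exact absurd h (ne_of_gt hκpos)
      · simpa [sub_eq_zero] using h
    rcases target_class hnat hfo hendo i y' hey with rfl | ⟨k, rfl⟩
    · simp at hmass
    · rw [mS_sgl] at hmass
      by_cases hk : k ∈ C
      · exact ⟨k, hk, rfl⟩
      · rw [if_neg hk] at hmass; norm_num at hmass
  -- conclude C is empty
  intro i
  by_contra hneg
  push_neg at hneg
  have hiC : i ∈ C := Finset.mem_filter.2 ⟨Finset.mem_univ i, hneg⟩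
  exact no_trap hC hiC (species_reach_zero hnat hfo hendo h0 hconn hnored i)

end Pos
section Pos2
variable {d : ℕ} {E : Finset (Edge d)} {κ : Edge d → ℝ} {A : Matrix (Fin d) (Fin d) ℝ} {b : Vec d}
variable (hnat : ∀ y, InV E y → ∀ i, ∃ n : ℕ, y i = (n : ℝ))
variable (hfo : ∀ y, IsSource E y → ∑ i, y i ≤ 1)
variable (hendo : Endotactic E)
variable (hκ : ∀ e ∈ E, 0 < κ e)
variable (hA : ∀ i j, A i j =
      ∑ e ∈ E.filter (fun e => e.1 = (Pi.single i 1 : Vec d)), κ e * (e.2 j - e.1 j))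
variable (hb : ∀ i, b i = ∑ e ∈ E.filter (fun e => e.1 = (0 : Vec d)), κ e * e.2 i)

lemma dot_indicator_neg {d : ℕ} (C : Finset (Fin d)) (y : Vec d) :
    y ⬝ᵥ (fun j => if j ∈ C then (-1:ℝ) else 0) = -∑ j ∈ C, y j := by
  have h : (fun j => if j ∈ C then (-1:ℝ) else 0) =
      -(fun j => if j ∈ C then (1:ℝ) else 0) := by
    funext j; by_cases h : j ∈ C <;> simp [h]
  rw [h, dotProduct_neg, dot_indicator]

include hnat hfo hendo hκ hA hb in
lemma equil_pos (hsimple : ∀ e ∈ E, e.1 ≠ e.2)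
    (h0 : InV E (0 : Vec d))
    (hconn : ∀ y z, InV E y → InV E z → WReach E y z)
    (hnored : ∀ i : Fin d, ∃ e ∈ E, e.2 i ≠ e.1 i)
    (x : Vec d) (hx : x ᵥ* A + b = 0) : ∀ i, 0 < x i := by
  have hnn := equil_nonneg hnat hfo hendo hκ hA hb hsimple h0 hconn hnored x hx
  set C : Finset (Fin d) := Finset.univ.filter (fun i => x i = 0) with hCdef
  have hxpos : ∀ i ∉ C, 0 < x i := fun i hi =>
    lt_of_le_of_ne (hnn i) (fun h => hi (Finset.mem_filter.2 ⟨Finset.mem_univ i, h.symm⟩))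
  have hmain : ∀ i ∈ Finset.univ, 0 ≤ x i * (∑ j ∈ C, A i j) := by
    intro i _
    by_cases hiC : i ∈ C
    · rw [(Finset.mem_filter.1 hiC).2, zero_mul]
    · refine mul_nonneg (hnn i) ?_
      rw [colsum hA, if_neg hiC]
      refine Finset.sum_nonneg fun e he => ?_
      have h2 : 0 ≤ ∑ j ∈ C, e.2 j :=
        mS_nonneg hnat (inV_of_mem_right (Finset.mem_filter.1 he).1) C
      have h3 := (hκ e (Finset.mem_filter.1 he).1).le
      nlinarith
  have hbnn : 0 ≤ ∑ j ∈ C, b j := by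
    rw [bsum hb]
    exact Finset.sum_nonneg fun e he => mul_nonneg (hκ e (Finset.mem_filter.1 he).1).le
      (mS_nonneg hnat (inV_of_mem_right (Finset.mem_filter.1 he).1) C)
  have hbal := balance x hx C
  have hsum0 : ∑ i, x i * (∑ j ∈ C, A i j) = 0 := by
    have h1 : 0 ≤ ∑ i, x i * (∑ j ∈ C, A i j) := Finset.sum_nonneg hmain
    linarith
  have hb0 : ∑ j ∈ C, b j = 0 := by linarith
  have heach := (Finset.sum_eq_zero_iff_of_nonneg hmain).1 hsum0
  -- edges from 0 carry no C-mass
  have hzeroC : ∀ e ∈ E, e.1 = (0 : Vec d) → ∑ j ∈ C, e.2 j = 0 := by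
    intro e heE he1
    rw [bsum hb] at hb0
    have := (Finset.sum_eq_zero_iff_of_nonneg fun e' he' =>
      mul_nonneg (hκ e' (Finset.mem_filter.1 he').1).le
        (mS_nonneg hnat (inV_of_mem_right (Finset.mem_filter.1 he').1) C)).1 hb0
        e (Finset.mem_filter.2 ⟨heE, he1⟩)
    rcases mul_eq_zero.1 this with h | h
    · exact absurd h (ne_of_gt (hκ e heE))
    · exact h
  -- edges from species outside C carry no C-mass
  have houtC : ∀ i, i ∉ C → ∀ e ∈ E, e.1 = (Pi.single i 1 : Vec d) → ∑ j ∈ C, e.2 j = 0 := by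
    intro i hiC e heE he1
    have hcs0 : (∑ j ∈ C, A i j) = 0 := by
      have := heach i (Finset.mem_univ i)
      rcases mul_eq_zero.1 this with h | h
      · exact absurd h (ne_of_gt (hxpos i hiC))
      · exact h
    rw [colsum hA, if_neg hiC] at hcs0
    have hnonneg : ∀ e' ∈ E.filter (fun e => e.1 = (Pi.single i 1 : Vec d)),
        0 ≤ κ e' * ((∑ j ∈ C, e'.2 j) - 0) := by
      intro e' he'
      have h2 : 0 ≤ ∑ j ∈ C, e'.2 j :=
        mS_nonneg hnat (inV_of_mem_right (Finset.mem_filter.1 he').1) C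
      have h3 := (hκ e' (Finset.mem_filter.1 he').1).le
      nlinarith
    have := (Finset.sum_eq_zero_iff_of_nonneg hnonneg).1 hcs0 e (Finset.mem_filter.2 ⟨heE, he1⟩)
    rcases mul_eq_zero.1 this with h | h
    · exact absurd h (ne_of_gt (hκ e heE))
    · simpa using h
  -- edges leaving C-species stay among C-species
  have hC : ∀ i ∈ C, ∀ y', ((Pi.single i 1 : Vec d), y') ∈ E →
      ∃ k ∈ C, y' = (Pi.single k 1 : Vec d) := by
    intro i hiC y' hey
    set u : Vec d := fun j => if j ∈ C then (-1:ℝ) else 0 with hu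
    have hdotsub : ∀ z w : Vec d, (w - z) ⬝ᵥ u = (∑ j ∈ C, z j) - (∑ j ∈ C, w j) := by
      intro z w
      rw [sub_dotProduct, dot_indicator_neg, dot_indicator_neg]; ring
    have hmass : ∑ j ∈ C, y' j = 1 := by
      by_contra hne
      have hm0 : ∑ j ∈ C, y' j = 0 := by
        rcases target_class hnat hfo hendo i y' hey with rfl | ⟨k, rfl⟩
        · simp
        · rw [mS_sgl] at hne ⊢
          by_cases hk : k ∈ C
          · rw [if_pos hk] at hne; norm_num at hne
          · rw [if_neg hk]
      refine hendo u ⟨(Pi.single i 1 : Vec d), y', hey, ?_, ?_⟩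
      · rw [hdotsub, hm0, mS_sgl, if_pos hiC]; norm_num
      · rintro z ⟨w, hw, hdw⟩
        rw [hdotsub] at hdw
        have hzdot : z ⬝ᵥ u = -∑ j ∈ C, z j := dot_indicator_neg C z
        have hidot : (Pi.single i 1 : Vec d) ⬝ᵥ u = -1 := by
          rw [dot_indicator_neg, mS_sgl, if_pos hiC]
        rw [hzdot, hidot]
        rcases source_class hnat hfo z ⟨w, hw⟩ with rfl | ⟨k, rfl⟩
        · exfalso
          apply hdw
          rw [hzeroC ((0:Vec d), w) hw rfl]
          simp
        · by_cases hk : k ∈ C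
          · rw [mS_sgl, if_pos hk]
          · exfalso
            apply hdw
            rw [houtC k hk ((Pi.single k 1 : Vec d), w) hw rfl, mS_sgl, if_neg hk]
            norm_num
    rcases target_class hnat hfo hendo i y' hey with rfl | ⟨k, rfl⟩
    · simp at hmass
    · rw [mS_sgl] at hmass
      by_cases hk : k ∈ C
      · exact ⟨k, hk, rfl⟩
      · rw [if_neg hk] at hmass; norm_num at hmass
  intro i
  rcases lt_or_eq_of_le (hnn i) with h | h
  · exact h
  · exfalso
    have hiC : i ∈ C := Finset.mem_filter.2 ⟨Finset.mem_univ i, h.symm⟩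
    exact no_trap hC hiC (species_reach_zero hnat hfo hendo h0 hconn hnored i)

end Pos2

/-- For a first order endotactic mass-action system whose reaction graph is
weakly connected and contains the zero complex, the average flux matrix `A` is
Metzler and WCDD, hence nonsingular with all eigenvalues of negative real part,
and `x_* = b(−A)⁻¹` is the unique equilibrium of `ẋ = xA + b`; moreover it is
entrywise strictly positive. -/
theorem stmt13 {d : ℕ} (E : Finset (Edge d)) (κ : Edge d → ℝ)
    (hsimple : ∀ e ∈ E, e.1 ≠ e.2)
    (hκ : ∀ e ∈ E, 0 < κ e)
    (hnat : ∀ y, InV E y → ∀ i, ∃ n : ℕ, y i = (n : ℝ))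
    (hfo : ∀ y, IsSource E y → ∑ i, y i ≤ 1)
    (hnored : ∀ i : Fin d, ∃ e ∈ E, e.2 i ≠ e.1 i)
    (hendo : Endotactic E)
    (h0 : InV E (0 : Vec d))
    (hconn : ∀ y z, InV E y → InV E z → WReach E y z)
    (A : Matrix (Fin d) (Fin d) ℝ)
    (hA : ∀ i j, A i j =
      ∑ e ∈ E.filter (fun e => e.1 = (Pi.single i 1 : Vec d)), κ e * (e.2 j - e.1 j))
    (b : Vec d)
    (hb : ∀ i, b i = ∑ e ∈ E.filter (fun e => e.1 = (0 : Vec d)), κ e * e.2 i) :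
    (∀ i j, i ≠ j → 0 ≤ A i j) ∧ WCDD A ∧ A.det ≠ 0 ∧
    (∀ μ : ℂ, IsEig A μ → μ.re < 0) ∧
    (∀ y : Vec d, y ᵥ* A + b = 0 ↔ y = b ᵥ* (-A)⁻¹) ∧
    (∀ i, 0 < (b ᵥ* (-A)⁻¹) i) := by
  have hmetz := metzler hnat hκ hA
  have hdom := row_dom hnat hfo hendo hκ hA
  have hchain := chain_to_sdd hnat hfo hendo hκ hA hsimple h0 hconn hnored
  have hdiag := diag_nonpos hnat hfo hendo hκ hA
  have hdet := det_ne_zero' hdom hdiag hchain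
  refine ⟨hmetz, ⟨hdom, fun i _ => hchain i⟩, hdet, eig_re_neg hdom hdiag hchain,
    equil_iff hdet b, ?_⟩
  have hx : (b ᵥ* (-A)⁻¹) ᵥ* A + b = 0 := (equil_iff hdet b _).2 rfl
  exact equil_pos hnat hfo hendo hκ hA hb hsimple h0 hconn hnored _ hx
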